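/- Let Γ be a pre-automatic structure over a finite alphabet A admitting an interpretation σ : A⁺ → S into a left reductive semigroup S. Then any two assignments of generators ι, ι' for Γ are equivalent, i.e., (ι(a), ι'(a)) ∈ L₌ for every a ∈ A; consequently Γ admits a unique interpretation up to isomorphism of the semigroup described. -/
import Mathlib


universe u v

/-- A pre-automatic structure over an alphabet `A`: a language `L` of nonempty words
(elements of the free semigroup `A⁺`), a relation `L₌ ⊆ L × L`, and for each letter
`a ∈ A` a relation `Lₐ ⊆ L × L`. -/
structure PreAutomaticStructure (A : Type u) where
  L : Set (FreeSemigroup A)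
  Leq : Set (FreeSemigroup A × FreeSemigroup A)
  Lletter : A → Set (FreeSemigroup A × FreeSemigroup A)
  Leq_sub : Leq ⊆ L ×ˢ L
  Lletter_sub : ∀ a, Lletter a ⊆ L ×ˢ L

/-- An interpretation of a pre-automatic structure with respect to a semigroup `S`:
a semigroup homomorphism `σ : A⁺ → S` such that (i) `σ(L) = S`, (ii) `L₌` captures
equality of representatives, (iii) `Lₐ` captures right multiplication by `a`. -/
structure IsInterpretation {A : Type u} {S : Type v} [Semigroup S]
    (Γ : PreAutomaticStructure A) (σ : FreeSemigroup A →ₙ* S) : Prop where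
  surj : ⇑σ '' Γ.L = Set.univ
  eq_iff : ∀ u ∈ Γ.L, ∀ v ∈ Γ.L, ((u, v) ∈ Γ.Leq ↔ σ u = σ v)
  step_iff : ∀ (a : A), ∀ u ∈ Γ.L, ∀ v ∈ Γ.L,
    ((u, v) ∈ Γ.Lletter a ↔ σ (u * FreeSemigroup.of a) = σ v)

/-- `σ` is consistent with the assignment of generators `ι : A → L`. -/
def ConsistentWith {A : Type u} {S : Type v} [Semigroup S] (Γ : PreAutomaticStructure A)
    (σ : FreeSemigroup A →ₙ* S) (ι : A → FreeSemigroup A) : Prop :=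
  (∀ a, ι a ∈ Γ.L) ∧ ∀ a, σ (ι a) = σ (FreeSemigroup.of a)

/-- `ι : A → L` is an assignment of generators: some interpretation is consistent with it. -/
def IsAssignment {A : Type u} (Γ : PreAutomaticStructure A)
    (ι : A → FreeSemigroup A) : Prop :=
  ∃ (T : Type v) (inst : Semigroup T)
    (τ : @MulHom (FreeSemigroup A) T _ inst.toMul),
    @IsInterpretation A T inst Γ τ ∧ @ConsistentWith A T inst Γ τ ι

/-- Composition of relations: `(u, v) ∈ R ∘ R'` iff `∃ x, (u, x) ∈ R ∧ (x, v) ∈ R'`. -/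
def relComp {W : Type*} (R R' : Set (W × W)) : Set (W × W) :=
  {p | ∃ x, (p.1, x) ∈ R ∧ (x, p.2) ∈ R'}

/-- The inverse of a relation. -/
def relInv {W : Type*} (R : Set (W × W)) : Set (W × W) := {p | (p.2, p.1) ∈ R}

/-- `L_w` for a word `w` given as a list of letters: `L_ε = L₌` and
`L_{a₁⋯aₙ} = L_{a₁} ∘ ⋯ ∘ L_{aₙ}`. -/
def PreAutomaticStructure.LwordList {A : Type u} (Γ : PreAutomaticStructure A) :
    List A → Set (FreeSemigroup A × FreeSemigroup A)
  | [] => Γ.Leq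
  | [a] => Γ.Lletter a
  | a :: b :: rest => relComp (Γ.Lletter a) (Γ.LwordList (b :: rest))

/-- `L_w` for a nonempty word `w ∈ A⁺`. -/
def PreAutomaticStructure.Lword {A : Type u} (Γ : PreAutomaticStructure A)
    (w : FreeSemigroup A) : Set (FreeSemigroup A × FreeSemigroup A) :=
  Γ.LwordList (w.head :: w.tail)


/-- Word built from a nonempty list of letters. -/
def wOf {A : Type*} : A → List A → FreeSemigroup A
  | a, [] => .of a
  | a, b :: r => .of a * wOf b r

lemma wOf_head_tail {A : Type*} (p : FreeSemigroup A) : wOf p.head p.tail = p := by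
  obtain ⟨h, t⟩ := p
  induction t generalizing h with
  | nil => rfl
  | cons b r ih => show FreeSemigroup.of h * wOf b r = _; rw [ih b]; rfl

lemma interp_rep {A : Type u} {T : Type v} [Semigroup T] {Γ : PreAutomaticStructure A}
    {τ : FreeSemigroup A →ₙ* T} (hτ : IsInterpretation Γ τ) (t : T) :
    ∃ u ∈ Γ.L, τ u = t := by
  have : t ∈ ⇑τ '' Γ.L := by rw [hτ.surj]; trivial
  obtain ⟨u, hu, h⟩ := this
  exact ⟨u, hu, h⟩

/-- Characterization of `LwordList` via any interpretation. -/
lemma lwordList_iff {A : Type u} {T : Type v} [Semigroup T] {Γ : PreAutomaticStructure A}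
    {τ : FreeSemigroup A →ₙ* T} (hτ : IsInterpretation Γ τ) :
    ∀ (r : List A) (a : A), ∀ u ∈ Γ.L, ∀ v ∈ Γ.L,
      ((u, v) ∈ Γ.LwordList (a :: r) ↔ τ (u * wOf a r) = τ v) := by
  intro r
  induction r with
  | nil =>
    intro a u hu v hv
    exact hτ.step_iff a u hu v hv
  | cons b r ih =>
    intro a u hu v hv
    constructor
    · rintro ⟨x, hx1, hx2⟩
      have hxL : x ∈ Γ.L := (Γ.Lletter_sub a hx1).2
      have h1 : τ (u * FreeSemigroup.of a) = τ x := (hτ.step_iff a u hu x hxL).mp hx1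
      have h2 : τ (x * wOf b r) = τ v := (ih b x hxL v hv).mp hx2
      show τ (u * (FreeSemigroup.of a * wOf b r)) = τ v
      rw [← mul_assoc, map_mul, h1, ← map_mul, h2]
    · intro h
      obtain ⟨x, hxL, hx⟩ := interp_rep hτ (τ (u * FreeSemigroup.of a))
      refine ⟨x, (hτ.step_iff a u hu x hxL).mpr hx.symm, (ih b x hxL v hv).mpr ?_⟩
      rw [map_mul, hx, ← map_mul, mul_assoc]
      exact h

/-- Key lemma: if `σ` maps into a left reductive semigroup, then agreement under any
interpretation `τ` (between a word in `L` and an arbitrary word) forces agreement under `σ`. -/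
lemma key {A : Type u} {S : Type v} [Semigroup S] {Γ : PreAutomaticStructure A}
    {σ : FreeSemigroup A →ₙ* S} (hσ : IsInterpretation Γ σ)
    (hred : ∀ s t : S, (∀ x : S, x * s = x * t) → s = t)
    {T : Type*} [Semigroup T] {τ : FreeSemigroup A →ₙ* T} (hτ : IsInterpretation Γ τ)
    (p : FreeSemigroup A) (u : FreeSemigroup A) (hu : u ∈ Γ.L) (h : τ u = τ p) :
    σ u = σ p := by
  apply hred
  intro x
  obtain ⟨z, hz, hzx⟩ := interp_rep hσ x
  obtain ⟨v, hv, hvp⟩ := interp_rep hτ (τ (z * p))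
  have hwp : wOf p.head p.tail = p := wOf_head_tail p
  have hwu : wOf u.head u.tail = u := wOf_head_tail u
  have h1 : (z, v) ∈ Γ.LwordList (p.head :: p.tail) :=
    (lwordList_iff hτ p.tail p.head z hz v hv).mpr (by rw [hwp]; exact hvp.symm)
  have h2 : (z, v) ∈ Γ.LwordList (u.head :: u.tail) :=
    (lwordList_iff hτ u.tail u.head z hz v hv).mpr
      (by rw [hwu, map_mul, h, ← map_mul]; exact hvp.symm)
  have s1 : σ (z * p) = σ v :=
    by have := (lwordList_iff hσ p.tail p.head z hz v hv).mp h1; rwa [hwp] at this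
  have s2 : σ (z * u) = σ v :=
    by have := (lwordList_iff hσ u.tail u.head z hz v hv).mp h2; rwa [hwu] at this
  calc x * σ u = σ (z * u) := by rw [map_mul, hzx]
    _ = σ (z * p) := by rw [s1, s2]
    _ = x * σ p := by rw [map_mul, hzx]

/-- Any interpretation is isomorphic to `σ` (into a left reductive semigroup). -/
lemma iso_to_sigma {A : Type u} {S : Type v} [Semigroup S] {Γ : PreAutomaticStructure A}
    {σ : FreeSemigroup A →ₙ* S} (hσ : IsInterpretation Γ σ)
    (hred : ∀ s t : S, (∀ x : S, x * s = x * t) → s = t)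
    {T : Type*} [Semigroup T] {τ : FreeSemigroup A →ₙ* T} (hτ : IsInterpretation Γ τ) :
    ∃ ρ : T ≃* S, ∀ w : FreeSemigroup A, ρ (τ w) = σ w := by
  choose rep repL repEq using fun t => interp_rep hτ t
  have hf : ∀ (t : T) (w : FreeSemigroup A), τ w = t → σ (rep t) = σ w := by
    intro t w hw
    exact key hσ hred hτ w (rep t) (repL t) (by rw [repEq, hw])
  have hmul : ∀ t₁ t₂ : T, σ (rep (t₁ * t₂)) = σ (rep t₁) * σ (rep t₂) := by
    intro t₁ t₂
    have := hf (t₁ * t₂) (rep t₁ * rep t₂) (by rw [map_mul, repEq, repEq])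
    rw [this, map_mul]
  have hinj : Function.Injective (fun t => σ (rep t)) := by
    intro t₁ t₂ h
    have : (rep t₁, rep t₂) ∈ Γ.Leq := (hσ.eq_iff _ (repL t₁) _ (repL t₂)).mpr h
    have := (hτ.eq_iff _ (repL t₁) _ (repL t₂)).mp this
    rw [repEq, repEq] at this
    exact this
  have hsurj : Function.Surjective (fun t => σ (rep t)) := by
    intro s
    obtain ⟨u, hu, hus⟩ := interp_rep hσ s
    exact ⟨τ u, by show σ (rep (τ u)) = s; rw [hf (τ u) u rfl, hus]⟩
  refine ⟨MulEquiv.ofBijective (⟨fun t => σ (rep t), hmul⟩ : T →ₙ* S) ⟨hinj, hsurj⟩, ?_⟩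
  intro w
  exact hf (τ w) w rfl

/-- If a pre-automatic structure admits an interpretation into a left reductive
semigroup, then any two assignments of generators are equivalent; consequently the
structure admits a unique interpretation up to isomorphism of the semigroup described. -/
theorem stmt_5 {A : Type*} [Finite A] {S : Type*} [Semigroup S]
    (Γ : PreAutomaticStructure A) (σ : FreeSemigroup A →ₙ* S)
    (hσ : IsInterpretation Γ σ)
    (hred : ∀ s t : S, (∀ x : S, x * s = x * t) → s = t)
    (ι ι' : A → FreeSemigroup A)
    (hι : IsAssignment Γ ι) (hι' : IsAssignment Γ ι') :
    (∀ a, (ι a, ι' a) ∈ Γ.Leq) ∧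
    (∀ (T T' : Type*) [Semigroup T] [Semigroup T']
      (τ : FreeSemigroup A →ₙ* T) (τ' : FreeSemigroup A →ₙ* T'),
      IsInterpretation Γ τ → IsInterpretation Γ τ' →
      ∃ ρ : T ≃* T', ∀ w : FreeSemigroup A, ρ (τ w) = τ' w) := by
  obtain ⟨T₁, inst₁, τ₁, hτ₁, hcons₁⟩ := hι
  obtain ⟨T₂, inst₂, τ₂, hτ₂, hcons₂⟩ := hι'
  constructor
  · intro a
    have h1 : σ (ι a) = σ (FreeSemigroup.of a) :=
      key hσ hred hτ₁ (FreeSemigroup.of a) (ι a) (hcons₁.1 a) (hcons₁.2 a)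
    have h2 : σ (ι' a) = σ (FreeSemigroup.of a) :=
      key hσ hred hτ₂ (FreeSemigroup.of a) (ι' a) (hcons₂.1 a) (hcons₂.2 a)
    exact (hσ.eq_iff _ (hcons₁.1 a) _ (hcons₂.1 a)).mpr (h1.trans h2.symm)
  · intro T T' _ _ τ τ' hτ hτ'
    obtain ⟨ρ₁, hρ₁⟩ := iso_to_sigma hσ hred hτ
    obtain ⟨ρ₂, hρ₂⟩ := iso_to_sigma hσ hred hτ'
    refine ⟨ρ₁.trans ρ₂.symm, fun w => ?_⟩
    simp only [MulEquiv.trans_apply, hρ₁ w]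
    rw [← hρ₂ w, MulEquiv.symm_apply_apply]
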